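/- arXiv:1803.08336 — 2 statements merged into one kernel-verified Lean document; each statement's English description precedes it below -/
import Mathlib

section
/- Let c₁, c₂, γ, κ, M be real numbers with κ > 0, γ > 0, M > 0, and 4γ²c₁ < c₂ < 0. Define G(y) = κ·((c₁y² − 2c₂)(y − 2γ) − 2c₂γ)/(My) − γ²κ·K for y ∈ (0, 2γ), where K is any real constant. Then G''(y) = (2κ/(My³))(c₁y³ + 2c₂γ) < 0 for all y ∈ (0, 2γ), G'(γ) > 0, and G'(2γ) < 0; hence G has a unique critical point ŷ ∈ (γ, 2γ), which is the unique maximizer of G on (0, 2γ). -/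
open Set

/-- Key calculus step of the welfare-maximization theorem: strict concavity of `G`
on `(0, 2γ)`, sign of `G'` at the endpoints `γ` and `2γ`, and existence of a unique
critical point `ŷ ∈ (γ, 2γ)` which uniquely maximizes `G` on `(0, 2γ)`. -/
theorem stmt_7 (c₁ c₂ γ κ M K : ℝ)
    (hκ : 0 < κ) (hγ : 0 < γ) (hM : 0 < M)
    (hc : 4 * γ ^ 2 * c₁ < c₂) (hc₂ : c₂ < 0)
    (G : ℝ → ℝ)
    (hG : ∀ y, G y = κ * ((c₁ * y ^ 2 - 2 * c₂) * (y - 2 * γ) - 2 * c₂ * γ) / (M * y)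
      - γ ^ 2 * κ * K) :
    (∀ y ∈ Set.Ioo (0:ℝ) (2 * γ),
        deriv (deriv G) y = 2 * κ / (M * y ^ 3) * (c₁ * y ^ 3 + 2 * c₂ * γ) ∧
        deriv (deriv G) y < 0) ∧
    0 < deriv G γ ∧
    deriv G (2 * γ) < 0 ∧
    (∃! yhat : ℝ, yhat ∈ Set.Ioo γ (2 * γ) ∧ deriv G yhat = 0 ∧
        ∀ y ∈ Set.Ioo (0:ℝ) (2 * γ), y ≠ yhat → G y < G yhat) := by
  have hMne : M ≠ 0 := hM.ne'
  have hκM : 0 < κ / M := div_pos hκ hM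
  have hc₁ : c₁ < 0 := by nlinarith
  have h2γ : 0 < 2 * γ := by linarith
  set D : ℝ → ℝ := fun y => κ/M * (2*c₁*y - 2*γ*c₁ - 2*c₂*γ/y^2) with hDdef
  -- first derivative
  have hd1 : ∀ y : ℝ, y ≠ 0 → HasDerivAt G (D y) y := by
    intro y hy
    have h1 : HasDerivAt (fun z : ℝ => z^2) (2*y) y := by
      simpa using (hasDerivAt_pow 2 y)
    have h2 : HasDerivAt (fun z : ℝ => z⁻¹) (-(y^2)⁻¹) y := by
      simpa using hasDerivAt_inv hy
    have hh : HasDerivAt (fun z : ℝ => κ/M*c₁*z^2 - κ/M*(2*γ*c₁)*z - κ/M*(2*c₂)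
        + (2*κ*c₂*γ/M)*z⁻¹ - γ^2*κ*K)
        (κ/M*c₁*(2*y) - κ/M*(2*γ*c₁)*1 + (2*κ*c₂*γ/M)*(-(y^2)⁻¹)) y := by
      exact ((((h1.const_mul (κ/M*c₁)).sub
        ((hasDerivAt_id y).const_mul (κ/M*(2*γ*c₁)))).sub_const (κ/M*(2*c₂))).add
        (h2.const_mul (2*κ*c₂*γ/M))).sub_const (γ^2*κ*K)
    have heq : G =ᶠ[nhds y] (fun z : ℝ => κ/M*c₁*z^2 - κ/M*(2*γ*c₁)*z - κ/M*(2*c₂)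
        + (2*κ*c₂*γ/M)*z⁻¹ - γ^2*κ*K) := by
      filter_upwards [isOpen_compl_singleton.mem_nhds hy] with z hz
      have hz' : z ≠ (0:ℝ) := hz
      rw [hG]
      field_simp
      ring
    have hval : D y = κ/M*c₁*(2*y) - κ/M*(2*γ*c₁)*1 + (2*κ*c₂*γ/M)*(-(y^2)⁻¹) := by
      simp only [hDdef]
      field_simp
      ring
    rw [hval]
    exact hh.congr_of_eventuallyEq heq
  have hderiv : ∀ y : ℝ, y ≠ 0 → deriv G y = D y := fun y hy => (hd1 y hy).deriv
  -- second derivative of G on y ≠ 0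
  have hd2 : ∀ y : ℝ, y ≠ 0 → HasDerivAt D (κ/M*(2*c₁ + 4*c₂*γ/y^3)) y := by
    intro y hy
    have h1 : HasDerivAt (fun z : ℝ => z^2) (2*y) y := by
      simpa using (hasDerivAt_pow 2 y)
    have h2 : HasDerivAt (fun z : ℝ => (z^2)⁻¹) (-(2*y) / (y^2)^2) y :=
      h1.inv (pow_ne_zero 2 hy)
    have hh : HasDerivAt (fun z : ℝ => κ/M * (2*c₁*z - 2*γ*c₁ - 2*c₂*γ*(z^2)⁻¹))
        (κ/M * (2*c₁*1 - 2*c₂*γ*(-(2*y) / (y^2)^2))) y := by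
      exact ((((hasDerivAt_id y).const_mul (2*c₁)).sub_const (2*γ*c₁)).sub
        (h2.const_mul (2*c₂*γ))).const_mul (κ/M)
    have hfun : (fun z : ℝ => κ/M * (2*c₁*z - 2*γ*c₁ - 2*c₂*γ*(z^2)⁻¹)) = D := by
      funext z
      simp only [hDdef, div_eq_mul_inv]
    have hval : κ/M * (2*c₁*1 - 2*c₂*γ*(-(2*y) / (y^2)^2)) = κ/M*(2*c₁ + 4*c₂*γ/y^3) := by
      field_simp
      ring
    rw [hfun, hval] at hh
    exact hh
  have hderiv2 : ∀ y : ℝ, y ≠ 0 → deriv (deriv G) y = κ/M*(2*c₁ + 4*c₂*γ/y^3) := by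
    intro y hy
    have heq : deriv G =ᶠ[nhds y] D := by
      filter_upwards [isOpen_compl_singleton.mem_nhds hy] with z hz
      exact hderiv z hz
    rw [Filter.EventuallyEq.deriv_eq heq]
    exact (hd2 y hy).deriv
  -- Part 1
  have part1 : ∀ y ∈ Set.Ioo (0:ℝ) (2 * γ),
      deriv (deriv G) y = 2 * κ / (M * y ^ 3) * (c₁ * y ^ 3 + 2 * c₂ * γ) ∧
      deriv (deriv G) y < 0 := by
    intro y hy
    have hy0 : 0 < y := hy.1
    have hy3 : 0 < y^3 := pow_pos hy0 3
    have heq : deriv (deriv G) y = 2 * κ / (M * y ^ 3) * (c₁ * y ^ 3 + 2 * c₂ * γ) := by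
      rw [hderiv2 y hy0.ne']
      field_simp
      ring
    refine ⟨heq, ?_⟩
    rw [heq]
    apply mul_neg_of_pos_of_neg
    · positivity
    · nlinarith
  -- Part 2
  have part2 : 0 < deriv G γ := by
    rw [hderiv γ hγ.ne']
    have : (2*c₁*γ - 2*γ*c₁ - 2*c₂*γ/γ^2) = -2*c₂/γ := by
      field_simp
      ring
    simp only [hDdef, this]
    apply mul_pos hκM
    apply div_pos (by linarith) hγ
  -- Part 3
  have part3 : deriv G (2*γ) < 0 := by
    rw [hderiv (2*γ) h2γ.ne']
    have : (2*c₁*(2*γ) - 2*γ*c₁ - 2*c₂*γ/(2*γ)^2) = (4*c₁*γ^2 - c₂)/(2*γ) := by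
      field_simp
      ring
    simp only [hDdef, this]
    apply mul_neg_of_pos_of_neg hκM
    exact div_neg_of_neg_of_pos (by nlinarith) h2γ
  -- continuity facts
  have hGcont : ∀ s : Set ℝ, (0:ℝ) ∉ s → ContinuousOn G s := by
    intro s hs y hy
    exact ((hd1 y (fun h => hs (h ▸ hy))).differentiableAt.continuousAt).continuousWithinAt
  have hDGeq : ∀ s : Set ℝ, (0:ℝ) ∉ s → Set.EqOn (deriv G) D s := by
    intro s hs y hy
    exact hderiv y (fun h => hs (h ▸ hy))
  have hDGcont : ∀ s : Set ℝ, (0:ℝ) ∉ s → ContinuousOn (deriv G) s := by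
    intro s hs
    refine ContinuousOn.congr ?_ (hDGeq s hs)
    intro y hy
    exact ((hd2 y (fun h => hs (h ▸ hy))).differentiableAt.continuousAt).continuousWithinAt
  have hnotmem : (0:ℝ) ∉ Set.Ioo (0:ℝ) (2*γ) := fun h => lt_irrefl 0 h.1
  -- strict antitonicity of deriv G on Ioo 0 (2γ)
  have hanti : StrictAntiOn (deriv G) (Set.Ioo (0:ℝ) (2*γ)) := by
    apply strictAntiOn_of_deriv_neg (convex_Ioo _ _) (hDGcont _ hnotmem)
    intro y hy
    rw [interior_Ioo] at hy
    exact (part1 y hy).2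
  -- existence of the critical point via IVT
  have hsub : Set.Icc γ (2*γ) ⊆ {y : ℝ | y ≠ 0} := by
    intro y hy
    exact (lt_of_lt_of_le hγ hy.1).ne'
  have hcontIcc : ContinuousOn (deriv G) (Set.Icc γ (2*γ)) :=
    hDGcont _ (fun h => by have := hsub h; simp at this)
  have hivt := intermediate_value_Ioo' (le_of_lt (by linarith : γ < 2*γ)) hcontIcc
  have h0mem : (0:ℝ) ∈ Set.Ioo (deriv G (2*γ)) (deriv G γ) := ⟨part3, part2⟩
  obtain ⟨yhat, hyhat, hyhat0⟩ := hivt h0mem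
  have hyhatIoo : yhat ∈ Set.Ioo (0:ℝ) (2*γ) := ⟨lt_trans hγ hyhat.1, hyhat.2⟩
  refine ⟨part1, part2, part3, yhat, ⟨hyhat, hyhat0, ?_⟩, ?_⟩
  · -- maximizer
    intro y hy hne
    rcases lt_or_gt_of_ne hne with hlt | hgt
    · -- y < yhat : G strictly increasing on [y, yhat]
      have hmono : StrictMonoOn G (Set.Icc y yhat) := by
        apply strictMonoOn_of_deriv_pos (convex_Icc _ _)
        · apply hGcont
          intro h
          exact absurd h.1 (not_le.mpr hy.1)
        · intro z hz
          rw [interior_Icc] at hz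
          have hzIoo : z ∈ Set.Ioo (0:ℝ) (2*γ) := ⟨lt_trans hy.1 hz.1, lt_trans hz.2 hyhatIoo.2⟩
          have := hanti hzIoo hyhatIoo hz.2
          rw [hyhat0] at this
          exact this
      exact hmono (Set.left_mem_Icc.mpr hlt.le) (Set.right_mem_Icc.mpr hlt.le) hlt
    · -- yhat < y : G strictly decreasing on [yhat, y]
      have hmono : StrictAntiOn G (Set.Icc yhat y) := by
        apply strictAntiOn_of_deriv_neg (convex_Icc _ _)
        · apply hGcont
          intro h
          exact absurd h.1 (not_le.mpr hyhatIoo.1)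
        · intro z hz
          rw [interior_Icc] at hz
          have hzIoo : z ∈ Set.Ioo (0:ℝ) (2*γ) := ⟨lt_trans hyhatIoo.1 hz.1, lt_trans hz.2 hy.2⟩
          have := hanti hyhatIoo hzIoo hz.1
          rw [hyhat0] at this
          linarith
      exact hmono (Set.left_mem_Icc.mpr hgt.le) (Set.right_mem_Icc.mpr hgt.le) hgt
  · -- uniqueness
    rintro y ⟨hymem, hy0, -⟩
    have hyIoo : y ∈ Set.Ioo (0:ℝ) (2*γ) := ⟨lt_trans hγ hymem.1, hymem.2⟩
    by_contra hne
    rcases lt_or_gt_of_ne hne with hlt | hgt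
    · have := hanti hyIoo hyhatIoo hlt
      rw [hy0, hyhat0] at this
      exact lt_irrefl 0 this
    · have := hanti hyhatIoo hyIoo hgt
      rw [hy0, hyhat0] at this
      exact lt_irrefl 0 this
end

section
/- Let κ(t) > 0, γ(t) ∈ ℝ, and let μ₁(t) < κ(t). Define f-difference = −μ₁(t)·(t²α² + t(w₀α + η²))/M and h-difference = (μ₁(t)²γ(t)²κ(t)/(2κ(t) − μ₁(t))²)·(Σᵢ E[ãᵢ²] − E[ã_Σ²]/M). If α·w₀ ≥ 0, η ≥ 0, t > 0, α ≠ 0 or η ≠ 0, and Σᵢ E[ãᵢ²] − E[ã_Σ²]/M > 0, then the function μ ↦ −μ(t²α² + t(w₀α + η²))/M − (μ²γ(t)²κ(t)/(2κ(t) − μ)²)(Σᵢ E[ãᵢ²] − E[ã_Σ²]/M) on (−∞, κ(t)) has supremum attained nowhere (the supremum over μ → −∞ direction is +∞ or approached but not attained); in particular, if t²α² + t(w₀α + η²) > 0, the objective tends to +∞ as μ → −∞ and no maximizer exists. -/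
open Filter

/-- Theorem 2(ii): when `αw₀ ≥ 0` (and the objective's linear coefficient is nonzero),
the per-time welfare objective tends to `+∞` as `μ → −∞` on `(−∞, κ(t))`, so no
welfare maximizer exists. Here `D = Σᵢ E[ãᵢ²] − E[ã_Σ²]/M > 0`. -/
theorem stmt_9 (α w₀ η t κt γt M D : ℝ)
    (hκ : 0 < κt) (hM : 0 < M) (hαw : 0 ≤ α * w₀) (hη : 0 ≤ η)
    (ht : 0 < t) (hne : α ≠ 0 ∨ η ≠ 0) (hD : 0 < D)
    (W : ℝ → ℝ)
    (hW : ∀ μ, W μ = -μ * (t ^ 2 * α ^ 2 + t * (w₀ * α + η ^ 2)) / M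
        - μ ^ 2 * γt ^ 2 * κt / (2 * κt - μ) ^ 2 * D) :
    Filter.Tendsto W Filter.atBot Filter.atTop ∧
    ¬ ∃ μ : ℝ, μ < κt ∧ ∀ μ' : ℝ, μ' < κt → W μ' ≤ W μ := by
  set c : ℝ := t ^ 2 * α ^ 2 + t * (w₀ * α + η ^ 2) with hc
  have hcpos : 0 < c := by
    rcases hne with hα | hη'
    · have : 0 < t ^ 2 * α ^ 2 := by positivity
      nlinarith [sq_nonneg η, mul_comm α w₀]
    · have : 0 < t * η ^ 2 := by positivity
      nlinarith [sq_nonneg (t * α), mul_comm α w₀]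
  have hcm : 0 < c / M := div_pos hcpos hM
  set B : ℝ := γt ^ 2 * κt * D with hB
  have key : ∀ μ : ℝ, μ < 0 → μ ^ 2 * γt ^ 2 * κt / (2 * κt - μ) ^ 2 * D ≤ B := by
    intro μ hμ
    have hden : (0:ℝ) < (2 * κt - μ) ^ 2 := by nlinarith
    rw [div_mul_eq_mul_div, div_le_iff₀ hden]
    nlinarith [sq_nonneg γt, mul_nonneg (mul_nonneg (sq_nonneg γt) hκ.le) hD.le,
      mul_pos hκ (show (0:ℝ) < κt - μ by linarith)]
  have htend : Filter.Tendsto W Filter.atBot Filter.atTop := by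
    have h1 : Filter.Tendsto (fun μ : ℝ => -μ * c / M - B) Filter.atBot Filter.atTop := by
      have : Filter.Tendsto (fun μ : ℝ => -μ * (c / M)) Filter.atBot Filter.atTop :=
        (tendsto_neg_atBot_atTop).atTop_mul_const hcm
      simpa [mul_div_assoc, sub_eq_add_neg, neg_div, neg_mul] using
        Filter.tendsto_atTop_add_const_right _ (-B) this
    refine Filter.tendsto_atTop_mono' _ ?_ h1
    filter_upwards [Filter.eventually_lt_atBot (0:ℝ)] with μ hμ
    rw [hW μ]
    have := key μ hμ
    linarith
  refine ⟨htend, ?_⟩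
  rintro ⟨μ, hμκ, hmax⟩
  have h1 : ∀ᶠ μ' in Filter.atBot, W μ < W μ' :=
    htend.eventually (Filter.eventually_gt_atTop (W μ))
  have h2 : ∀ᶠ μ' : ℝ in Filter.atBot, μ' < κt := Filter.eventually_lt_atBot κt
  rcases (h1.and h2).exists with ⟨μ', hgt, hlt⟩
  exact absurd (hmax μ' hlt) (not_le.mpr hgt)
end
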